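/- Converse characterization: let A be a countable type and let G be a subgroup of the permutation group of A that is closed in the topology of pointwise convergence, with the induced topology. Suppose that for every finite subset A₀ ⊆ A, writing H = {g ∈ G : ∀ a ∈ A₀, g a = a} for the pointwise stabilizer (an open subgroup of G), the following holds: for every set V with an H-action whose point stabilizers are open in H, every family of H-invariant relations R_V i ⊆ V^(n i), and every finite set D with relations R_D i ⊆ D^(n i), if there exists a homomorphism from (V, R_V) to (D, R_D) then there exists an H-equivariant homomorphism. Then G is extremely amenable, i.e., every continuous action of G on a nonempty compact Hausdorff space has a fixed point. -/

import Mathlib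

universe u v w z y

/-- The topology of pointwise convergence on the permutation group of `A`:
the topology induced from the product topology on `A → A`, with `A` discrete. -/
instance permPtwiseTop (A : Type u) : TopologicalSpace (Equiv.Perm A) :=
  TopologicalSpace.induced (fun g : Equiv.Perm A => (g : A → A))
    (@Pi.topologicalSpace A (fun _ => A) (fun _ => ⊥))

/-- The pointwise stabilizer of a finite set `A₀ ⊆ A` inside a subgroup `G` of the
permutation group of `A`. -/
def pwStab {A : Type u} (G : Subgroup (Equiv.Perm A)) (A₀ : Finset A) : Subgroup G where
  carrier := {g : G | ∀ a ∈ A₀, (g : Equiv.Perm A) a = a}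
  one_mem' := fun a _ => rfl
  mul_mem' := by
    intro g h hg hh a ha
    simp only [Subgroup.coe_mul, Equiv.Perm.mul_apply, hh a ha, hg a ha]
  inv_mem' := by
    intro g hg a ha
    have h1 := hg a ha
    simp only [Subgroup.coe_inv]
    nth_rewrite 1 [← h1]
    exact Equiv.symm_apply_apply _ _

/-! ### Auxiliary definitions for the CSP instance -/

section Aux

variable {A : Type u} {G : Subgroup (Equiv.Perm A)}

open Classical in
/-- Partial decoding along an injection `e : A ↪ ℕ`. -/
noncomputable def pdec (e : A ↪ ℕ) : ℕ → Option A :=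
  fun k => if h : ∃ a, e a = k then some h.choose else none

theorem pdec_e (e : A ↪ ℕ) (a : A) : pdec e (e a) = some a := by
  unfold pdec
  rw [dif_pos ⟨a, rfl⟩]
  exact congrArg some (e.injective (Exists.choose_spec (⟨a, rfl⟩ : ∃ b, e b = e a)))

theorem pdec_some {e : A ↪ ℕ} {k : ℕ} {a : A} (h : pdec e k = some a) : e a = k := by
  unfold pdec at h
  split_ifs at h with h'
  · rw [Option.some.injEq] at h
    rw [← h]
    exact h'.choose_spec

/-- The action of `G` on codes of elements of `A`. -/
noncomputable def gact (e : A ↪ ℕ) {β : Type} (g : G) (v : β → ℕ) : β → ℕ :=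
  fun i => match pdec e (v i) with
  | none => v i
  | some a => e ((g : Equiv.Perm A) a)

theorem gact_one (e : A ↪ ℕ) {β : Type} (v : β → ℕ) : gact e (1 : G) v = v := by
  funext i
  unfold gact
  rcases hd : pdec e (v i) with _ | a
  · rfl
  · simp only [OneMemClass.coe_one, Equiv.Perm.coe_one, id_eq]
    exact pdec_some hd

theorem gact_mul (e : A ↪ ℕ) {β : Type} (g h : G) (v : β → ℕ) :
    gact e (g * h) v = gact e g (gact e h v) := by
  funext i
  rcases hd : pdec e (v i) with _ | a
  · show _ = gact e g (gact e h v) i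
    unfold gact
    simp only [hd]
  · show _ = gact e g (gact e h v) i
    unfold gact
    simp only [hd, pdec_e]
    simp [Subgroup.coe_mul, Equiv.Perm.mul_apply]

/-- Embedding of a "coset" of a pointwise stabilizer as a tuple of codes. -/
noncomputable def pemb (e : A ↪ ℕ) {β : Type} (bm : β → A) (g : G) : β → ℕ :=
  fun i => e ((g : Equiv.Perm A) (bm i))

theorem gact_pemb (e : A ↪ ℕ) {β : Type} (bm : β → A) (g g' : G) :
    gact e g (pemb e bm g') = pemb e bm (g * g') := by
  funext i
  unfold gact pemb
  simp only [pdec_e]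
  simp [Subgroup.coe_mul, Equiv.Perm.mul_apply]

/-- The `MulAction` of a subgroup of `G` on lifted tuples of codes. -/
noncomputable def cspAction (e : A ↪ ℕ) (β : Type) (H : Subgroup G) :
    MulAction H (ULift.{w} (β → ℕ)) where
  smul h vv := ⟨gact e (h : G) vv.down⟩
  one_smul vv := by
    show (⟨gact e ((1 : H) : G) vv.down⟩ : ULift.{w} (β → ℕ)) = vv
    rw [ULift.ext_iff]
    show gact e ((1 : H) : G) vv.down = vv.down
    rw [OneMemClass.coe_one, gact_one]
  mul_smul g h vv := by
    show (⟨gact e ((g * h : H) : G) vv.down⟩ : ULift.{w} (β → ℕ)) = _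
    rw [ULift.ext_iff]
    show gact e ((g * h : H) : G) vv.down = gact e (g : G) (gact e (h : G) vv.down)
    rw [Subgroup.coe_mul, gact_mul]

/-- An open cover datum. -/
structure ACover (X : Type y) [TopologicalSpace X] where
  m : ℕ
  hm : 0 < m
  U : Fin m → Set X
  hopen : ∀ j, IsOpen (U j)
  hcov : ∀ x : X, ∃ j, x ∈ U j

end Aux

set_option maxHeartbeats 1000000 in
set_option synthInstance.maxHeartbeats 400000 in
theorem stmt_14 {A : Type u} [Countable A] (G : Subgroup (Equiv.Perm A))
    (hclosed : IsClosed (G : Set (Equiv.Perm A)))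
    (hcsp : ∀ (A₀ : Finset A) (ι : Type v) (V : Type w) (D : Type z) (n : ι → ℕ)
      [MulAction (pwStab G A₀) V] [Finite D]
      (RV : ∀ i, (Fin (n i) → V) → Prop) (RD : ∀ i, (Fin (n i) → D) → Prop),
      (∀ v : V, IsOpen {h : pwStab G A₀ | h • v = v}) →
      (∀ i (x : Fin (n i) → V) (h : pwStab G A₀), RV i x → RV i (fun k => h • x k)) →
      (∃ f : V → D, ∀ i (x : Fin (n i) → V), RV i x → RD i (f ∘ x)) →
      ∃ f : V → D, (∀ i (x : Fin (n i) → V), RV i x → RD i (f ∘ x)) ∧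
        ∀ (h : pwStab G A₀) (v : V), f (h • v) = f v) :
    ∀ (X : Type y) [TopologicalSpace X] [CompactSpace X] [T2Space X] [Nonempty X]
      [MulAction G X], Continuous (fun p : G × X => p.1 • p.2) →
      ∃ x : X, ∀ g : G, g • x = x := by
  intro X _ _ _ _ _ hcont
  classical
  letI : TopologicalSpace A := ⊥
  haveI : DiscreteTopology A := ⟨rfl⟩
  obtain ⟨x₀⟩ := (inferInstance : Nonempty X)
  obtain ⟨ef, hef⟩ := exists_injective_nat A
  set e : A ↪ ℕ := ⟨ef, hef⟩ with he
  -- Continuity of individual translations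
  have hktrans : ∀ k : G, Continuous (fun x : X => k • x) := by
    intro k
    have : Continuous (fun x : X => ((k, x) : G × X)) := Continuous.prodMk continuous_const continuous_id
    exact hcont.comp this
  -- L1 : basic neighborhoods give pointwise stabilizer control
  have L1 : ∀ (y : X) (U : Set X), IsOpen U → y ∈ U →
      ∃ (Bf : Finset A) (W : Set X), IsOpen W ∧ y ∈ W ∧
        ∀ h : G, (∀ a ∈ Bf, (h : Equiv.Perm A) a = a) → ∀ x ∈ W, h • x ∈ U := by
    intro y U hU hyU
    have hS : IsOpen ((fun p : G × X => p.1 • p.2) ⁻¹' U) := hU.preimage hcont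
    have hmem : ((1 : G), y) ∈ (fun p : G × X => p.1 • p.2) ⁻¹' U := by
      simp only [Set.mem_preimage, one_smul]; exact hyU
    obtain ⟨uG, W, huG, hW, h1u, hyW, hsub⟩ := isOpen_prod_iff.mp hS 1 y hmem
    -- unfold the induced topologies on `G`
    obtain ⟨u₁, hu₁, hu₁eq⟩ := isOpen_induced_iff.mp huG
    obtain ⟨O, hO, hOeq⟩ := isOpen_induced_iff.mp hu₁
    have h1O : ((1 : Equiv.Perm A) : A → A) ∈ O := by
      have h1u₁ : ((1 : G) : Equiv.Perm A) ∈ u₁ := by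
        rw [← hu₁eq] at h1u; exact h1u
      rw [← hOeq] at h1u₁
      simpa using h1u₁
    obtain ⟨I, uu, huu, hIsub⟩ := isOpen_pi_iff.mp hO _ h1O
    refine ⟨I, W, hW, hyW, ?_⟩
    intro h hfix x hx
    have hmemO : ((h : Equiv.Perm A) : A → A) ∈ O := by
      apply hIsub
      intro a ha
      have h2 := (huu a ha).2
      simp only [Equiv.Perm.coe_one, id_eq] at h2
      show ((h : Equiv.Perm A) : A → A) a ∈ uu a
      rw [hfix a ha]
      exact h2
    have hhu : h ∈ uG := by
      rw [← hu₁eq]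
      show (h : Equiv.Perm A) ∈ u₁
      rw [← hOeq]
      exact hmemO
    exact hsub (Set.mk_mem_prod hhu hx)
  -- L2 : uniform finite stabilizer for a cover
  have L2 : ∀ (m : ℕ) (U : Fin m → Set X), (∀ j, IsOpen (U j)) → (∀ x, ∃ j, x ∈ U j) →
      ∃ Bf : Finset A, ∀ yy : X, ∃ j, ∀ h : G,
        (∀ a ∈ Bf, (h : Equiv.Perm A) a = a) → h • yy ∈ U j := by
    intro m U hUo hUc
    choose jf hjf using hUc
    choose Bfy Wy hWyo hWym hWy using fun y : X => L1 y (U (jf y)) (hUo _) (hjf y)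
    obtain ⟨T, hT⟩ := IsCompact.elim_finite_subcover isCompact_univ Wy hWyo
      (fun x _ => Set.mem_iUnion.mpr ⟨x, hWym x⟩)
    refine ⟨T.biUnion Bfy, ?_⟩
    intro yy
    obtain ⟨t, ht, hyt⟩ : ∃ t ∈ T, yy ∈ Wy t := by
      have := hT (Set.mem_univ yy)
      simpa using this
    refine ⟨jf t, fun h hfix => ?_⟩
    exact hWy t h (fun a ha => hfix a (Finset.mem_biUnion.mpr ⟨t, ht, ha⟩)) yy hyt
  -- L3 : the main CSP step
  have L3 : ∀ (c : ACover X) (F : Finset G),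
      ∃ (x : X) (j : Fin c.m), ∀ k ∈ F, k • x ∈ closure (c.U j) := by
    intro c F
    obtain ⟨Bf, hBf⟩ := L2 c.m c.U c.hopen c.hcov
    set β := Fin Bf.card with hβ
    set bm : β → A := fun i => (Bf.equivFin.symm i : A) with hbm
    set emb : G → (β → ℕ) := fun g => pemb e bm g with hemb
    -- the CSP data
    set ι' : Type v := ULift.{v} ((r : ℕ) × (Fin r → (β → ℕ))) with hι'
    set V' : Type w := ULift.{w} (β → ℕ) with hV'
    set D' : Type z := ULift.{z} (Fin c.m) with hD'
    set nn : ι' → ℕ := fun i => i.down.1 with hnn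
    letI instAct : MulAction (pwStab G (∅ : Finset A)) V' := cspAction e β (pwStab G ∅)
    have smul_def : ∀ (h : pwStab G (∅ : Finset A)) (vv : V'),
        h • vv = ⟨gact e (h : G) vv.down⟩ := fun _ _ => rfl
    set RV : ∀ i : ι', (Fin (nn i) → V') → Prop :=
      fun i x => ∃ g : G, ∀ l, (x l).down = gact e g (i.down.2 l) with hRV
    set RD : ∀ i : ι', (Fin (nn i) → D') → Prop :=
      fun i d => ∃ xx : X, ∀ l, ∀ g : G, i.down.2 l = emb g →
        g⁻¹ • xx ∈ closure (c.U (d l).down) with hRD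
    -- open stabilizers
    have hopen : ∀ vv : V', IsOpen {h : pwStab G (∅ : Finset A) | h • vv = vv} := by
      intro vv
      have hset : {h : pwStab G (∅ : Finset A) | h • vv = vv}
          = ⋂ i : β, {h : pwStab G (∅ : Finset A) | gact e (h : G) vv.down i = vv.down i} := by
        ext h
        simp only [Set.mem_setOf_eq, Set.mem_iInter, smul_def h vv]
        constructor
        · intro hh i
          exact congrFun (congrArg ULift.down hh) i
        · intro hh
          exact congrArg ULift.up (funext hh)
      rw [hset]
      apply isOpen_iInter_of_finite
      intro i
      rcases hd : pdec e (vv.down i) with _ | a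
      · have : {h : pwStab G (∅ : Finset A) | gact e (h : G) vv.down i = vv.down i} = Set.univ := by
          ext h
          simp only [Set.mem_setOf_eq, Set.mem_univ, iff_true]
          unfold gact
          simp [hd]
        rw [this]; exact isOpen_univ
      · have hset2 : {h : pwStab G (∅ : Finset A) | gact e (h : G) vv.down i = vv.down i}
            = (fun h : pwStab G (∅ : Finset A) => (((h : G) : Equiv.Perm A) : A → A))
              ⁻¹' {f : A → A | f a = a} := by
          ext h
          simp only [Set.mem_setOf_eq, Set.mem_preimage]
          unfold gact
          simp only [hd]
          rw [← pdec_some hd]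
          exact ⟨fun hh => e.injective hh, fun hh => congrArg e hh⟩
        rw [hset2]
        apply IsOpen.preimage
        · have c1 : Continuous (fun h : pwStab G (∅ : Finset A) => ((h : G) : Equiv.Perm A)) :=
            continuous_subtype_val.comp continuous_subtype_val
          have c2 : Continuous (fun g : Equiv.Perm A => (g : A → A)) := continuous_induced_dom
          exact c2.comp c1
        · have : {f : A → A | f a = a} = (fun f : A → A => f a) ⁻¹' {a} := rfl
          rw [this]
          apply IsOpen.preimage (continuous_apply a)
          exact isOpen_discrete _
    -- invariance of RV
    have hinv : ∀ i (x : Fin (nn i) → V') (h : pwStab G (∅ : Finset A)),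
        RV i x → RV i (fun k => h • x k) := by
      intro i x h ⟨g, hg⟩
      refine ⟨(h : G) * g, fun l => ?_⟩
      show (h • x l).down = _
      rw [smul_def, gact_mul]
      show gact e (h : G) (x l).down = _
      rw [hg l]
    -- existence of a solution
    have hcolor : ∀ vv : β → ℕ, ∃ j : Fin c.m, ∀ g : G, vv = emb g → g⁻¹ • x₀ ∈ c.U j := by
      intro vv
      by_cases hv : ∃ g₀ : G, vv = emb g₀
      · obtain ⟨g₀, hg₀⟩ := hv
        obtain ⟨j, hj⟩ := hBf (g₀⁻¹ • x₀)
        refine ⟨j, fun g hg => ?_⟩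
        have hfix : ∀ a ∈ Bf, ((g₀⁻¹ * g : G) : Equiv.Perm A) a = a := by
          intro a ha
          obtain ⟨i, hi⟩ : ∃ i : β, bm i = a := by
            refine ⟨Bf.equivFin ⟨a, ha⟩, ?_⟩
            rw [hbm]
            simp
          have hcong := congrFun (hg.symm.trans hg₀) i
          rw [hemb] at hcong
          unfold pemb at hcong
          have happ : (g : Equiv.Perm A) (bm i) = (g₀ : Equiv.Perm A) (bm i) :=
            e.injective hcong
          rw [Subgroup.coe_mul, Equiv.Perm.mul_apply, ← hi, happ, Subgroup.coe_inv]
          exact Equiv.symm_apply_apply _ _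
        have hfix' : ∀ a ∈ Bf, (((g₀⁻¹ * g)⁻¹ : G) : Equiv.Perm A) a = a := by
          intro a ha
          rw [Subgroup.coe_inv]
          nth_rewrite 1 [← hfix a ha]
          exact Equiv.symm_apply_apply _ _
        have hj' := hj ((g₀⁻¹ * g)⁻¹) hfix'
        have : ((g₀⁻¹ * g)⁻¹ * g₀⁻¹) • x₀ = g⁻¹ • x₀ := by
          congr 1
          group
        rw [← mul_smul, this] at hj'
        exact hj'
      · exact ⟨⟨0, c.hm⟩, fun g hg => absurd ⟨g, hg⟩ hv⟩
    choose colf hcolf using hcolor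
    set f₀ : V' → D' := fun vv => ⟨colf vv.down⟩ with hf₀
    have hsol : ∃ f : V' → D', ∀ i (x : Fin (nn i) → V'), RV i x → RD i (f ∘ x) := by
      refine ⟨f₀, ?_⟩
      rintro i x ⟨g₀, hg₀⟩
      refine ⟨g₀⁻¹ • x₀, fun l g hlg => ?_⟩
      have hx : (x l).down = emb (g₀ * g) := by
        rw [hg₀ l, hlg, hemb]
        exact gact_pemb e bm g₀ g
      have hcc := hcolf (x l).down (g₀ * g) hx
      rw [mul_inv_rev, mul_smul] at hcc
      exact subset_closure hcc
    obtain ⟨f, hfhom, hfequi⟩ :=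
      @hcsp (∅ : Finset A) ι' V' D' nn instAct inferInstance RV RD hopen hinv hsol
    -- f is constant on embedded cosets
    have hconst : ∀ g : G, f ⟨emb g⟩ = f ⟨emb 1⟩ := by
      intro g
      have hmem : g ∈ pwStab G (∅ : Finset A) := by
        intro a ha
        exact absurd ha (Finset.notMem_empty a)
      have hsmul : (⟨g, hmem⟩ : pwStab G (∅ : Finset A)) • (⟨emb 1⟩ : V') = ⟨emb g⟩ := by
        rw [smul_def, ULift.ext_iff]
        show gact e g (emb 1) = emb g
        rw [hemb]
        show gact e g (pemb e bm 1) = pemb e bm g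
        rw [gact_pemb, mul_one]
      rw [← hsmul, hfequi]
    -- apply the homomorphism to the tuple of (inverses of) elements of F
    set r := F.card with hr
    set km : Fin r → G := fun l => ((F.equivFin.symm l : F) : G) with hkm
    set idx : ι' := ⟨⟨r, fun l => emb ((km l)⁻¹)⟩⟩ with hidx
    set xt : Fin (nn idx) → V' := fun l => ⟨emb ((km l)⁻¹)⟩ with hxt
    have hRVxt : RV idx xt := by
      refine ⟨1, fun l => ?_⟩
      show emb ((km l)⁻¹) = gact e 1 _
      rw [gact_one]
    obtain ⟨xx, hxx⟩ := hfhom idx xt hRVxt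
    refine ⟨xx, (f ⟨emb 1⟩).down, fun k hk => ?_⟩
    set l : Fin (nn idx) := F.equivFin ⟨k, hk⟩ with hl
    have hkml : km l = k := by
      rw [hkm, hl]
      simp
    have hstep := hxx l ((km l)⁻¹) rfl
    rw [inv_inv] at hstep
    have hfval : ((f ∘ xt) l) = f ⟨emb 1⟩ := hconst _
    rw [hfval] at hstep
    rw [← hkml]
    exact hstep
  -- L4 : intersect over all covers and finite sets
  set J := Finset G × ACover X with hJ
  set Z : J → Set X := fun p => {x | ∃ j, ∀ k ∈ p.1, k • x ∈ closure (p.2.U j)} with hZ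
  have hZclosed : ∀ p : J, IsClosed (Z p) := by
    intro p
    have : Z p = ⋃ j, ⋂ k ∈ p.1, (fun x : X => k • x) ⁻¹' closure (p.2.U j) := by
      ext x
      simp [hZ, Set.mem_iUnion, Set.mem_iInter]
    rw [this]
    apply isClosed_iUnion_of_finite
    intro j
    apply isClosed_biInter
    intro k _
    exact IsClosed.preimage (hktrans k) isClosed_closure
  have hZne : ∀ p : J, (Z p).Nonempty := by
    intro p
    obtain ⟨x, j, hx⟩ := L3 p.2 p.1
    exact ⟨x, j, hx⟩
  have hZdir : Directed (· ⊇ ·) Z := by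
    intro p q
    set cref : ACover X :=
      { m := p.2.m * q.2.m
        hm := Nat.mul_pos p.2.hm q.2.hm
        U := fun j => p.2.U (finProdFinEquiv.symm j).1 ∩ q.2.U (finProdFinEquiv.symm j).2
        hopen := fun j => (p.2.hopen _).inter (q.2.hopen _)
        hcov := by
          intro x
          obtain ⟨j1, hj1⟩ := p.2.hcov x
          obtain ⟨j2, hj2⟩ := q.2.hcov x
          refine ⟨finProdFinEquiv (j1, j2), ?_⟩
          simp only [Equiv.symm_apply_apply]
          exact ⟨hj1, hj2⟩ } with hcref
    refine ⟨(p.1 ∪ q.1, cref), ?_, ?_⟩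
    · rintro x ⟨j, hx⟩
      refine ⟨(finProdFinEquiv.symm j).1, fun k hk => ?_⟩
      have := hx k (Finset.mem_union_left _ hk)
      exact closure_mono Set.inter_subset_left this
    · rintro x ⟨j, hx⟩
      refine ⟨(finProdFinEquiv.symm j).2, fun k hk => ?_⟩
      have := hx k (Finset.mem_union_right _ hk)
      exact closure_mono Set.inter_subset_right this
  haveI : Nonempty J := ⟨(∅, ⟨1, Nat.one_pos, fun _ => Set.univ, fun _ => isOpen_univ,
    fun x => ⟨0, Set.mem_univ x⟩⟩)⟩
  obtain ⟨xb, hxb⟩ := IsCompact.nonempty_iInter_of_directed_nonempty_isCompact_isClosed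
    Z hZdir hZne (fun p => (hZclosed p).isCompact) hZclosed
  refine ⟨xb, ?_⟩
  intro g
  by_contra hne
  -- separate xb from g • xb
  obtain ⟨P, Q, hP, hQ, hxP, hgQ, hdisj⟩ := t2_separation (Ne.symm hne)
  -- shrink P and Q
  obtain ⟨P', OP, hP'o, hOPo, hxP', hPcOP, hdisjP⟩ :=
    normal_separation (isClosed_singleton (x := xb)) (hP.isClosed_compl)
      (by simp [Set.disjoint_singleton_left, hxP])
  obtain ⟨Q', OQ, hQ'o, hOQo, hgQ', hQcOQ, hdisjQ⟩ :=
    normal_separation (isClosed_singleton (x := g • xb)) (hQ.isClosed_compl)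
      (by simp [Set.disjoint_singleton_left, hgQ])
  have hxP'' : xb ∈ P' := hxP' rfl
  have hgQ'' : g • xb ∈ Q' := hgQ' rfl
  have hclP' : closure P' ⊆ P := by
    have h1 : P' ⊆ OPᶜ := Set.disjoint_left.mp hdisjP
    have h2 : closure P' ⊆ OPᶜ := closure_minimal h1 hOPo.isClosed_compl
    intro x hx
    by_contra hxp
    exact (h2 hx) (hPcOP hxp)
  have hclQ' : closure Q' ⊆ Q := by
    have h1 : Q' ⊆ OQᶜ := Set.disjoint_left.mp hdisjQ
    have h2 : closure Q' ⊆ OQᶜ := closure_minimal h1 hOQo.isClosed_compl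
    intro x hx
    by_contra hxq
    exact (h2 hx) (hQcOQ hxq)
  -- the separating cover
  set csep : ACover X :=
    { m := 3
      hm := by norm_num
      U := ![P, Q, (closure P' ∪ closure Q')ᶜ]
      hopen := by
        intro j
        fin_cases j
        · exact hP
        · exact hQ
        · exact (IsClosed.union isClosed_closure isClosed_closure).isOpen_compl
      hcov := by
        intro x
        by_cases hxp : x ∈ P
        · exact ⟨0, hxp⟩
        by_cases hxq : x ∈ Q
        · exact ⟨1, hxq⟩
        refine ⟨2, ?_⟩
        show x ∈ (closure P' ∪ closure Q')ᶜ
        intro hx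
        rcases hx with hx | hx
        · exact hxp (hclP' hx)
        · exact hxq (hclQ' hx) } with hcsep
  have hxbZ : xb ∈ Z (({1, g} : Finset G), csep) := by
    have := Set.mem_iInter.mp hxb (({1, g} : Finset G), csep)
    exact this
  obtain ⟨j, hj⟩ := hxbZ
  have h1m : (1 : G) ∈ ({1, g} : Finset G) := Finset.mem_insert_self _ _
  have hgm : g ∈ ({1, g} : Finset G) := Finset.mem_insert_of_mem (Finset.mem_singleton_self g)
  have hx1 := hj 1 h1m
  have hxg := hj g hgm
  rw [one_smul] at hx1
  -- closure facts
  have hclPQ : closure P ⊆ Qᶜ :=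
    closure_minimal (fun x hx hq => Set.disjoint_left.mp hdisj hx hq) hQ.isClosed_compl
  have hclQP : closure Q ⊆ Pᶜ :=
    closure_minimal (fun x hx hp => Set.disjoint_left.mp hdisj hp hx) hP.isClosed_compl
  have hclW : closure ((closure P' ∪ closure Q')ᶜ) ⊆ P'ᶜ := by
    apply closure_minimal
    · intro x hx
      intro hxP'mem
      exact hx (Or.inl (subset_closure hxP'mem))
    · exact hP'o.isClosed_compl
  fin_cases j
  · -- j = 0 : g • xb ∈ closure P, but g • xb ∈ Q
    exact hclPQ hxg hgQ
  · -- j = 1 : xb ∈ closure Q, but xb ∈ P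
    exact hclQP hx1 hxP
  · -- j = 2 : xb ∈ closure third, but xb ∈ P'
    exact hclW hx1 hxP''
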